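/- Let r be a real number and let V : ℕ → ℝ have non-increasing differences. If r + V(i+1) ≤ V(i) for some i ∈ ℕ, then r + V(j+1) ≤ V(j) for all j ≥ i. Consequently the set {i ∈ ℕ : r + V(i+1) ≤ V(i)} is upward closed, i.e., there exists a threshold T ∈ ℕ ∪ {∞} such that r + V(i+1) ≤ V(i) holds exactly for those i with i ≥ T. -/
import Mathlib


/-- Theorem 1 structure: if `V` has non-increasing differences then the set
`{i | r + V (i+1) ≤ V i}` is upward closed, and hence there is a threshold `T ∈ ℕ∞` such that
`r + V (i+1) ≤ V i` holds exactly for `i ≥ T`. -/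
theorem threshold_structure (r : ℝ) (V : ℕ → ℝ)
    (hV : ∀ i : ℕ, V (i + 2) - V (i + 1) ≤ V (i + 1) - V i) :
    (∀ i : ℕ, r + V (i + 1) ≤ V i → ∀ j : ℕ, i ≤ j → r + V (j + 1) ≤ V j) ∧
    ∃ T : ℕ∞, ∀ i : ℕ, (r + V (i + 1) ≤ V i ↔ T ≤ (i : ℕ∞)) := by
  have up : ∀ i : ℕ, r + V (i + 1) ≤ V i → ∀ j : ℕ, i ≤ j → r + V (j + 1) ≤ V j := by
    intro i hi j hij
    induction j with
    | zero => simpa [Nat.le_zero.mp hij] using hi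
    | succ k ih =>
      rcases Nat.lt_or_ge i (k+1) with h | h
      · have hk := ih (Nat.lt_succ_iff.mp h)
        have := hV k
        linarith
      · have : i = k + 1 := le_antisymm hij h
        simpa [this] using hi
  refine ⟨up, ?_⟩
  by_cases h : ∃ i : ℕ, r + V (i + 1) ≤ V i
  · refine ⟨(Nat.find h : ℕ∞), fun i => ?_⟩
    constructor
    · intro hi
      exact_mod_cast Nat.cast_le.mpr (Nat.find_le hi)
    · intro hi
      exact up (Nat.find h) (Nat.find_spec h) i (by exact_mod_cast hi)
  · refine ⟨⊤, fun i => ?_⟩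
    constructor
    · intro hi; exact absurd ⟨i, hi⟩ h
    · intro hi; exact absurd (top_le_iff.mp hi) (by simp)
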